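/- Let X be a strictly convex finite-dimensional real normed space and f : X → X a real analytic nonexpansive map. If Fix(f) is nonempty, then Fix(f) is an affine subspace of X. -/

import Mathlib

theorem stmt_2 {X : Type*} [NormedAddCommGroup X] [NormedSpace ℝ X]
    [FiniteDimensional ℝ X] [StrictConvexSpace ℝ X]
    (f : X → X) (hf_an : ∀ x : X, AnalyticAt ℝ f x)
    (hf : ∀ u v : X, ‖f u - f v‖ ≤ ‖u - v‖)
    (hne : (Function.fixedPoints f).Nonempty) :
    ∃ W : AffineSubspace ℝ X, (W : Set X) = Function.fixedPoints f := by
  have hfd : ∀ u v : X, dist (f u) (f v) ≤ dist u v := by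
    intro u v; simpa [dist_eq_norm] using hf u v
  -- Step 1: fixed point set is convex
  have hconv : Convex ℝ (Function.fixedPoints f) := by
    intro u hu v hv a b ha hb hab
    have hy : a • u + b • v = AffineMap.lineMap u v b := by
      rw [AffineMap.lineMap_apply_module]
      have : a = 1 - b := by linarith
      rw [this]
    set y : X := a • u + b • v with hydef
    have h1 : dist u (f y) ≤ b * dist u v := by
      calc dist u (f y) = dist (f u) (f y) := by rw [hu]
        _ ≤ dist u y := hfd u y
        _ = b * dist u v := by
            rw [hy, dist_comm, dist_lineMap_left, Real.norm_eq_abs, abs_of_nonneg hb]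
    have h2 : dist (f y) v ≤ (1 - b) * dist u v := by
      calc dist (f y) v = dist (f y) (f v) := by rw [hv]
        _ ≤ dist y v := hfd y v
        _ = (1 - b) * dist u v := by
            rw [hy, dist_lineMap_right, Real.norm_eq_abs]
            rw [abs_of_nonneg (by linarith : (0:ℝ) ≤ 1 - b)]
    have htri : dist u v ≤ dist u (f y) + dist (f y) v := dist_triangle _ _ _
    have e1 : dist u (f y) = b * dist u v := by linarith
    have e2 : dist (f y) v = (1 - b) * dist u v := by linarith
    have := eq_lineMap_of_dist_eq_mul_of_dist_eq_mul e1 e2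
    have : f y = y := by rw [this, ← hy]
    exact this
  obtain ⟨p, hp⟩ := hne
  set W : AffineSubspace ℝ X := affineSpan ℝ (Function.fixedPoints f) with hW
  refine ⟨W, ?_⟩
  set V : Submodule ℝ X := W.direction with hV
  have hpW : p ∈ W := subset_affineSpan ℝ _ hp
  -- the shifted fixed set inside V
  set s' : Set V := {v : V | p + (v : X) ∈ Function.fixedPoints f} with hs'
  have h0s' : (0 : V) ∈ s' := by simpa [hs'] using hp
  -- s' is convex
  have hconv' : Convex ℝ s' := by
    intro x hx y hy a b ha hb hab
    have hc : ((a • x + b • y : V) : X) = a • (x : X) + b • (y : X) := by push_cast; ring_nf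
    have heq : a • (p + (x : X)) + b • (p + (y : X)) = p + ((a • x + b • y : V) : X) := by
      rw [hc, smul_add, smul_add,
        show a • p + a • (x:X) + (b • p + b • (y:X))
          = (a • p + b • p) + (a • (x:X) + b • (y:X)) by abel,
        ← add_smul, hab, one_smul]
    have hm := hconv hx hy ha hb hab
    rw [heq] at hm
    exact hm
  -- diff of a fixed point with p lies in V
  have hmemV : ∀ w : X, w ∈ Function.fixedPoints f → w - p ∈ V := by
    intro w hw
    have : w -ᵥ p ∈ W.direction :=
      AffineSubspace.vsub_mem_direction (subset_affineSpan ℝ _ hw) hpW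
    simpa [vsub_eq_sub] using this
  -- affine span of s' is everything
  have hspan : affineSpan ℝ s' = ⊤ := by
    rw [AffineSubspace.affineSpan_eq_top_iff_vectorSpan_eq_top_of_nonempty ℝ _ _ ⟨0, h0s'⟩]
    have hvs : vectorSpan ℝ s' = Submodule.span ℝ s' := by
      rw [vectorSpan_eq_span_vsub_set_right ℝ h0s']
      congr 1
      ext z
      simp [vsub_eq_sub]
    rw [hvs]
    rw [Submodule.eq_top_iff']
    intro u
    have hu : (u : X) ∈ Submodule.span ℝ ((fun w => w -ᵥ p) '' Function.fixedPoints f) := by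
      have : (u : X) ∈ W.direction := u.2
      rwa [hW, direction_affineSpan, vectorSpan_eq_span_vsub_set_right ℝ hp] at this
    have hsub : ((fun w => w -ᵥ p) '' Function.fixedPoints f) ⊆ (V.subtype '' s') := by
      rintro _ ⟨w, hwfix, rfl⟩
      refine ⟨⟨w -ᵥ p, by simpa [vsub_eq_sub] using hmemV w hwfix⟩, ?_, rfl⟩
      simpa [hs', vsub_eq_sub] using hwfix
    have hu2 : (u : X) ∈ Submodule.span ℝ (V.subtype '' s') :=
      Submodule.span_mono hsub hu
    rw [← Submodule.map_span] at hu2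
    obtain ⟨z, hz, hzu⟩ := hu2
    have : z = u := Subtype.ext hzu
    rwa [this] at hz
  -- interior of s' is nonempty
  obtain ⟨v₀, hv₀⟩ := (hconv'.interior_nonempty_iff_affineSpan_eq_top).mpr hspan
  -- the analytic function on V
  set h : V → X := fun v => f (p + (v : X)) - (p + (v : X)) with hh
  have hin : ∀ v : V, AnalyticAt ℝ (fun v : V => p + (v : X)) v := by
    intro v
    exact analyticAt_const.add (V.subtypeL.analyticAt v)
  have hAn : AnalyticOnNhd ℝ h Set.univ := by
    intro v _
    exact ((hf_an _).comp (hin v)).sub (hin v)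
  have hzero : ∀ v ∈ s', h v = 0 := by
    intro v hv
    simp only [hh]
    rw [hv]
    simp
  have hev : h =ᶠ[nhds v₀] 0 := by
    filter_upwards [isOpen_interior.mem_nhds hv₀] with v hv
    exact hzero v (interior_subset hv)
  have hEq : Set.EqOn h 0 Set.univ :=
    hAn.eqOn_zero_of_preconnected_of_eventuallyEq_zero isPreconnected_univ
      (Set.mem_univ v₀) hev
  -- conclude
  ext x
  constructor
  · intro hx
    have hxp : x - p ∈ V := by
      have : x -ᵥ p ∈ W.direction := AffineSubspace.vsub_mem_direction hx hpW
      simpa [vsub_eq_sub] using this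
    have := hEq (Set.mem_univ (⟨x - p, hxp⟩ : V))
    simp only [hh, Pi.zero_apply] at this
    have hx' : f (p + (x - p)) = p + (x - p) := by
      rwa [sub_eq_zero] at this
    exact (by simpa [add_sub_cancel] using hx' : f x = x)
  · intro hx
    exact subset_affineSpan ℝ _ hx
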